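/- Let L = I - H∂_x - Q with Q(x) = 4/(1+x^2). Then LQ = -(1/2)Q^2 and L(Q^2) = -2Q - Q^2. -/

import Mathlib

open MeasureTheory Real

/-- The soliton profile. -/
noncomputable def Q (x : ℝ) : ℝ := 4 / (1 + x ^ 2)

/-- The Hilbert transform, `Hf(x) = -(1/π) p.v. ∫ f(y)/(x-y) dy`. -/
noncomputable def hilbertT (f : ℝ → ℝ) (x : ℝ) : ℝ :=
  -(1 / Real.pi) * Filter.limUnder (nhdsWithin 0 (Set.Ioi 0))
    (fun ε : ℝ => ∫ y in {y : ℝ | ε ≤ |x - y|}, f y / (x - y))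

/-- The linearized operator `L = I - H∂ₓ - Q`. -/
noncomputable def Lop (f : ℝ → ℝ) (x : ℝ) : ℝ := f x - hilbertT (deriv f) x - Q x * f x

open Set Filter Topology

lemma one_add_sq_pos (y : ℝ) : (0:ℝ) < 1 + y ^ 2 := by positivity

/-- The explicit antiderivative used in the principal value computation. -/
noncomputable def FF (x A P b₁ b₂ b₃ b₄ : ℝ) (y : ℝ) : ℝ :=
  A / 2 * (Real.log (1 + y ^ 2) - Real.log ((x - y) ^ 2)) + P * Real.arctan y
    + (b₁ + b₂ * y) / (1 + y ^ 2) + (b₃ + b₄ * y) / (1 + y ^ 2) ^ 2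

lemma hasDerivAt_FF (x A P b₁ b₂ b₃ b₄ y : ℝ) (hy : y ≠ x) :
    HasDerivAt (FF x A P b₁ b₂ b₃ b₄)
      (A / 2 * (2 * y / (1 + y ^ 2) + 2 / (x - y)) + P * (1 / (1 + y ^ 2))
        + (b₂ * (1 + y ^ 2) - (b₁ + b₂ * y) * (2 * y)) / (1 + y ^ 2) ^ 2
        + ((b₄) * ((1 + y ^ 2) ^ 2) - (b₃ + b₄ * y) * (2 * (1 + y ^ 2) ^ 1 * (2 * y))) / ((1 + y ^ 2) ^ 2) ^ 2) y := by
  have hxy : x - y ≠ 0 := sub_ne_zero.2 (Ne.symm hy)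
  have h1 : HasDerivAt (fun y : ℝ => 1 + y ^ 2) (2 * y) y := by
    simpa using (hasDerivAt_pow 2 y).const_add 1
  have h2 : HasDerivAt (fun y : ℝ => x - y) (-1) y := (hasDerivAt_id y).const_sub x
  have h3 : HasDerivAt (fun y : ℝ => (x - y) ^ 2) (2 * (x - y) ^ 1 * (-1)) y := h2.pow 2
  have hlog1 : HasDerivAt (fun y : ℝ => Real.log (1 + y ^ 2)) (2 * y / (1 + y ^ 2)) y :=
    h1.log (one_add_sq_pos y).ne'
  have hlog2 : HasDerivAt (fun y : ℝ => Real.log ((x - y) ^ 2))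
      (2 * (x - y) ^ 1 * (-1) / (x - y) ^ 2) y := h3.log (pow_ne_zero 2 hxy)
  have harc : HasDerivAt (fun y : ℝ => P * Real.arctan y) (P * (1 / (1 + y ^ 2))) y :=
    (Real.hasDerivAt_arctan y).const_mul P
  have hr1 : HasDerivAt (fun y : ℝ => (b₁ + b₂ * y) / (1 + y ^ 2))
      ((b₂ * (1 + y ^ 2) - (b₁ + b₂ * y) * (2 * y)) / (1 + y ^ 2) ^ 2) y := by
    simpa [Pi.div_def] using (((hasDerivAt_id y).const_mul b₂).const_add b₁).div h1 (one_add_sq_pos y).ne'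
  have h1sq : HasDerivAt (fun y : ℝ => (1 + y ^ 2) ^ 2) (2 * (1 + y ^ 2) ^ 1 * (2 * y)) y := h1.pow 2
  have hr2 : HasDerivAt (fun y : ℝ => (b₃ + b₄ * y) / (1 + y ^ 2) ^ 2)
      ((b₄ * ((1 + y ^ 2) ^ 2) - (b₃ + b₄ * y) * (2 * (1 + y ^ 2) ^ 1 * (2 * y))) / ((1 + y ^ 2) ^ 2) ^ 2) y := by
    have := (((hasDerivAt_id y).const_mul b₄).const_add b₃).div h1sq (pow_ne_zero 2 (one_add_sq_pos y).ne')
    simpa [Pi.div_def] using this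
  have hlog : HasDerivAt (fun y : ℝ => A / 2 * (Real.log (1 + y ^ 2) - Real.log ((x - y) ^ 2)))
      (A / 2 * (2 * y / (1 + y ^ 2) + 2 / (x - y))) y := by
    have := (hlog1.sub hlog2).const_mul (A / 2)
    refine this.congr_deriv ?_
    field_simp
    ring
  exact ((hlog.add harc).add hr1).add hr2

lemma FF_tendsto (x A P b₁ b₂ b₃ b₄ : ℝ) (l : Filter ℝ)
    (hinv : Tendsto (fun y : ℝ => y⁻¹) l (𝓝 0))
    (hne : ∀ᶠ y in l, y ≠ 0 ∧ x - y ≠ 0)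
    (La : ℝ) (harc : Tendsto Real.arctan l (𝓝 La)) :
    Tendsto (FF x A P b₁ b₂ b₃ b₄) l (𝓝 (P * La)) := by
  have hlograt : Tendsto (fun y : ℝ => Real.log (1 + y ^ 2) - Real.log ((x - y) ^ 2)) l (𝓝 0) := by
    have hr : Tendsto (fun y : ℝ => ((y⁻¹) ^ 2 + 1) / ((x * y⁻¹ - 1) ^ 2)) l (𝓝 1) := by
      have hnum : Tendsto (fun y : ℝ => (y⁻¹) ^ 2 + 1) l (𝓝 1) := by
        have := ((hinv.pow 2).add tendsto_const_nhds : Tendsto (fun y : ℝ => (y⁻¹) ^ 2 + 1) l (𝓝 (0 ^ 2 + 1)))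
        simpa using this
      have hden : Tendsto (fun y : ℝ => (x * y⁻¹ - 1) ^ 2) l (𝓝 1) := by
        have := (((tendsto_const_nhds.mul hinv).sub tendsto_const_nhds).pow 2 :
          Tendsto (fun y : ℝ => (x * y⁻¹ - 1) ^ 2) l (𝓝 ((x * 0 - 1) ^ 2)))
        simpa using this
      simpa [Pi.div_def] using hnum.div hden one_ne_zero
    have hlog : Tendsto (fun y : ℝ => Real.log (((y⁻¹) ^ 2 + 1) / ((x * y⁻¹ - 1) ^ 2))) l (𝓝 0) := by
      have := (Real.continuousAt_log one_ne_zero).tendsto.comp hr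
      simpa [Function.comp_def] using this
    refine hlog.congr' ?_
    filter_upwards [hne] with y hy
    obtain ⟨hy0, hxy⟩ := hy
    have hfac : x * y⁻¹ - 1 = (x - y) * y⁻¹ := by field_simp
    have hden_ne : (x * y⁻¹ - 1) ^ 2 ≠ 0 := by
      rw [hfac]; exact pow_ne_zero 2 (mul_ne_zero hxy (inv_ne_zero hy0))
    have e1 : Real.log ((y⁻¹) ^ 2 + 1) = Real.log (1 + y ^ 2) - Real.log (y ^ 2) := by
      rw [show (y⁻¹) ^ 2 + 1 = (1 + y ^ 2) / y ^ 2 by field_simp]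
      exact Real.log_div (one_add_sq_pos y).ne' (pow_ne_zero 2 hy0)
    have e2 : Real.log ((x * y⁻¹ - 1) ^ 2) = Real.log ((x - y) ^ 2) - Real.log (y ^ 2) := by
      rw [show (x * y⁻¹ - 1) ^ 2 = (x - y) ^ 2 / y ^ 2 by rw [hfac]; field_simp]
      exact Real.log_div (pow_ne_zero 2 hxy) (pow_ne_zero 2 hy0)
    rw [Real.log_div (by positivity) hden_ne, e1, e2]
    ring
  have hrat1 : Tendsto (fun y : ℝ => (b₁ + b₂ * y) / (1 + y ^ 2)) l (𝓝 0) := by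
    have h : Tendsto (fun y : ℝ => (b₁ * (y⁻¹) ^ 2 + b₂ * y⁻¹) / ((y⁻¹) ^ 2 + 1)) l (𝓝 0) := by
      have hnum : Tendsto (fun y : ℝ => b₁ * (y⁻¹) ^ 2 + b₂ * y⁻¹) l (𝓝 0) := by
        have h' : Tendsto (fun y : ℝ => b₁ * (y⁻¹) ^ 2 + b₂ * y⁻¹) l (𝓝 (b₁ * 0 ^ 2 + b₂ * 0)) :=
          (tendsto_const_nhds.mul (hinv.pow 2)).add (tendsto_const_nhds.mul hinv)
        simpa using h'
      have hden : Tendsto (fun y : ℝ => (y⁻¹) ^ 2 + 1) l (𝓝 1) := by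
        have := (hinv.pow 2).add (tendsto_const_nhds : Tendsto (fun _ : ℝ => (1:ℝ)) l _)
        simpa using this
      simpa [Pi.div_def] using hnum.div hden one_ne_zero
    refine h.congr' ?_
    filter_upwards [hne] with y hy
    obtain ⟨hy0, -⟩ := hy
    field_simp
  have hrat2 : Tendsto (fun y : ℝ => (b₃ + b₄ * y) / (1 + y ^ 2) ^ 2) l (𝓝 0) := by
    have h : Tendsto (fun y : ℝ => (b₃ * (y⁻¹) ^ 4 + b₄ * (y⁻¹) ^ 3) / ((y⁻¹) ^ 2 + 1) ^ 2) l (𝓝 0) := by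
      have hnum : Tendsto (fun y : ℝ => b₃ * (y⁻¹) ^ 4 + b₄ * (y⁻¹) ^ 3) l (𝓝 0) := by
        have h' : Tendsto (fun y : ℝ => b₃ * (y⁻¹) ^ 4 + b₄ * (y⁻¹) ^ 3) l (𝓝 (b₃ * 0 ^ 4 + b₄ * 0 ^ 3)) :=
          (tendsto_const_nhds.mul (hinv.pow 4)).add (tendsto_const_nhds.mul (hinv.pow 3))
        simpa using h'
      have hden : Tendsto (fun y : ℝ => ((y⁻¹) ^ 2 + 1) ^ 2) l (𝓝 1) := by
        have := ((hinv.pow 2).add (tendsto_const_nhds : Tendsto (fun _ : ℝ => (1:ℝ)) l _)).pow 2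
        simpa using this
      simpa [Pi.div_def] using hnum.div hden one_ne_zero
    refine h.congr' ?_
    filter_upwards [hne] with y hy
    obtain ⟨hy0, -⟩ := hy
    field_simp
  have h := ((((hlograt.const_mul (A / 2)).add (harc.const_mul P)).add hrat1).add hrat2)
  rw [show P * La = A / 2 * 0 + P * La + 0 + 0 by ring]
  exact h

lemma integrableOn_kernel (x C ε : ℝ) (hε : 0 < ε) (g : ℝ → ℝ) (hm : Measurable g)
    (hb : ∀ y, |g y| ≤ C / (1 + y ^ 2)) {s : Set ℝ} (hs : MeasurableSet s)
    (hsub : ∀ y ∈ s, ε ≤ |x - y|) :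
    IntegrableOn (fun y => g y / (x - y)) s := by
  have hint : Integrable (fun y : ℝ => C / ε * (1 + y ^ 2)⁻¹) :=
    integrable_inv_one_add_sq.const_mul _
  refine (hint.restrict (s := s)).mono' ?_ ?_
  · exact ((hm.div ((measurable_const.sub measurable_id'))).aestronglyMeasurable).restrict
  · rw [ae_restrict_iff' hs]
    filter_upwards with y hy
    have h1 : ε ≤ |x - y| := hsub y hy
    have h2 : (0:ℝ) ≤ C / (1 + y ^ 2) := le_trans (abs_nonneg _) (hb y)
    have : ‖g y / (x - y)‖ = |g y| / |x - y| := by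
      rw [Real.norm_eq_abs, abs_div]
    rw [this]
    calc |g y| / |x - y| ≤ (C / (1 + y ^ 2)) / ε := div_le_div₀ h2 (hb y) hε h1
      _ = C / ε * (1 + y ^ 2)⁻¹ := by
          rw [div_div, div_mul_eq_div_div]
          ring_nf

lemma tendsto_inv_atBot_zero' : Tendsto (fun y : ℝ => y⁻¹) atBot (𝓝 0) := by
  rw [tendsto_zero_iff_abs_tendsto_zero]
  have h := tendsto_abs_atBot_atTop.inv_tendsto_atTop (f := fun y : ℝ => |y|)
  exact h.congr fun y => (abs_inv y).symm

lemma key (x A P b₁ b₂ b₃ b₄ C : ℝ) (g : ℝ → ℝ) (hm : Measurable g)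
    (hb : ∀ y, |g y| ≤ C / (1 + y ^ 2))
    (hd : ∀ y : ℝ, y ≠ x → HasDerivAt (FF x A P b₁ b₂ b₃ b₄) (g y / (x - y)) y) :
    hilbertT g x = -P := by
  set F := FF x A P b₁ b₂ b₃ b₄ with hF
  have htop : Tendsto F atTop (𝓝 (P * (π / 2))) := by
    refine FF_tendsto x A P b₁ b₂ b₃ b₄ atTop tendsto_inv_atTop_zero ?_ (π / 2)
      (Real.tendsto_arctan_atTop.mono_right nhdsWithin_le_nhds)
    filter_upwards [eventually_gt_atTop (max x 0)] with y hy
    exact ⟨ne_of_gt (lt_of_le_of_lt (le_max_right x 0) hy),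
      sub_ne_zero.2 (ne_of_lt (lt_of_le_of_lt (le_max_left x 0) hy))⟩
  have hbot : Tendsto F atBot (𝓝 (P * (-(π / 2)))) := by
    refine FF_tendsto x A P b₁ b₂ b₃ b₄ atBot tendsto_inv_atBot_zero' ?_ (-(π / 2))
      (Real.tendsto_arctan_atBot.mono_right nhdsWithin_le_nhds)
    filter_upwards [eventually_lt_atBot (min x 0)] with y hy
    exact ⟨ne_of_lt (lt_of_lt_of_le hy (min_le_right x 0)),
      sub_ne_zero.2 (ne_of_gt (lt_of_lt_of_le hy (min_le_left x 0)))⟩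
  have hval : ∀ ε : ℝ, 0 < ε → ∫ y in {y : ℝ | ε ≤ |x - y|}, g y / (x - y)
      = (F (x - ε) - P * (-(π / 2))) + (P * (π / 2) - F (x + ε)) := by
    intro ε hε
    have hset : {y : ℝ | ε ≤ |x - y|} = Iic (x - ε) ∪ Ici (x + ε) := by
      ext y
      simp only [mem_setOf_eq, mem_union, mem_Iic, mem_Ici, le_abs]
      constructor
      · rintro (h | h)
        · left; linarith
        · right; linarith
      · rintro (h | h)
        · left; linarith
        · right; linarith
    have hint1 : IntegrableOn (fun y => g y / (x - y)) (Iic (x - ε)) := by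
      refine integrableOn_kernel x C ε hε g hm hb measurableSet_Iic fun y hy => ?_
      rw [mem_Iic] at hy
      exact le_abs.2 (Or.inl (by linarith))
    have hint2 : IntegrableOn (fun y => g y / (x - y)) (Ici (x + ε)) := by
      refine integrableOn_kernel x C ε hε g hm hb measurableSet_Ici fun y hy => ?_
      rw [mem_Ici] at hy
      exact le_abs.2 (Or.inr (by simp only [neg_sub]; linarith))
    have hdisj : Disjoint (Iic (x - ε)) (Ici (x + ε)) :=
      Iic_disjoint_Ici.2 (by intro h; linarith [h])
    rw [hset, setIntegral_union hdisj measurableSet_Ici hint1 hint2]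
    have e1 : ∫ y in Iic (x - ε), g y / (x - y) = F (x - ε) - P * (-(π / 2)) := by
      refine integral_Iic_of_hasDerivAt_of_tendsto' (fun y hy => hd y ?_) hint1 hbot
      rw [mem_Iic] at hy; intro h; rw [h] at hy; linarith
    have e2 : ∫ y in Ici (x + ε), g y / (x - y) = P * (π / 2) - F (x + ε) := by
      rw [integral_Ici_eq_integral_Ioi]
      refine integral_Ioi_of_hasDerivAt_of_tendsto' (fun y hy => hd y ?_)
        (hint2.mono_set Ioi_subset_Ici_self) htop
      rw [mem_Ici] at hy; intro h; rw [h] at hy; linarith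
    rw [e1, e2]
  have hdiff : Tendsto (fun ε : ℝ => F (x - ε) - F (x + ε)) (𝓝[>] (0:ℝ)) (𝓝 0) := by
    set K : ℝ → ℝ := fun y => A / 2 * Real.log (1 + y ^ 2) + P * Real.arctan y
      + (b₁ + b₂ * y) / (1 + y ^ 2) + (b₃ + b₄ * y) / (1 + y ^ 2) ^ 2 with hK
    have c1 : Continuous fun y : ℝ => 1 + y ^ 2 := by continuity
    have c2 : Continuous fun y : ℝ => Real.log (1 + y ^ 2) :=
      c1.log fun y => (one_add_sq_pos y).ne'
    have c3 : Continuous fun y : ℝ => b₁ + b₂ * y := by continuity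
    have c4 : Continuous fun y : ℝ => b₃ + b₄ * y := by continuity
    have hKcont : Continuous K := by
      exact (((continuous_const.mul c2).add (continuous_const.mul Real.continuous_arctan)).add
        (c3.div c1 fun y => (one_add_sq_pos y).ne')).add
        (c4.div (c1.pow 2) fun y => pow_ne_zero 2 (one_add_sq_pos y).ne')
    have h1 : Tendsto (fun ε : ℝ => K (x - ε) - K (x + ε)) (𝓝[>] (0:ℝ)) (𝓝 0) := by
      have ha : Tendsto (fun ε : ℝ => x - ε) (𝓝[>] (0:ℝ)) (𝓝 x) := by
        have h' : Tendsto (fun ε : ℝ => x - ε) (𝓝 (0:ℝ)) (𝓝 (x - 0)) :=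
          (continuous_const.sub continuous_id).tendsto 0
        rw [sub_zero] at h'
        exact h'.mono_left nhdsWithin_le_nhds
      have hb' : Tendsto (fun ε : ℝ => x + ε) (𝓝[>] (0:ℝ)) (𝓝 x) := by
        have h' : Tendsto (fun ε : ℝ => x + ε) (𝓝 (0:ℝ)) (𝓝 (x + 0)) :=
          (continuous_const.add continuous_id).tendsto 0
        rw [add_zero] at h'
        exact h'.mono_left nhdsWithin_le_nhds
      have := (hKcont.tendsto x).comp ha |>.sub ((hKcont.tendsto x).comp hb')
      simpa using this
    refine h1.congr' ?_
    filter_upwards [self_mem_nhdsWithin] with ε (hε : (0:ℝ) < ε)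
    have hε' : ε ≠ 0 := ne_of_gt hε
    have e1 : (x - (x - ε)) ^ 2 = ε ^ 2 := by ring
    have e2 : (x - (x + ε)) ^ 2 = ε ^ 2 := by ring
    simp only [hF, FF, hK, e1, e2]
    ring
  have htend : Tendsto (fun ε : ℝ => ∫ y in {y : ℝ | ε ≤ |x - y|}, g y / (x - y))
      (𝓝[>] (0:ℝ)) (𝓝 (P * π)) := by
    have h2 : Tendsto (fun ε : ℝ => (F (x - ε) - F (x + ε)) + P * π) (𝓝[>] (0:ℝ))
        (𝓝 (0 + P * π)) := hdiff.add tendsto_const_nhds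
    rw [zero_add] at h2
    refine h2.congr' ?_
    filter_upwards [self_mem_nhdsWithin] with ε (hε : (0:ℝ) < ε)
    rw [hval ε hε]
    ring
  have hlim : limUnder (𝓝[>] (0:ℝ))
      (fun ε : ℝ => ∫ y in {y : ℝ | ε ≤ |x - y|}, g y / (x - y)) = P * π :=
    htend.limUnder_eq
  unfold hilbertT
  rw [hlim]
  field_simp

lemma hasDerivAt_Q (y : ℝ) : HasDerivAt Q (-8 * y / (1 + y ^ 2) ^ 2) y := by
  have h1 : HasDerivAt (fun y : ℝ => 1 + y ^ 2) (2 * y) y := by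
    simpa using (hasDerivAt_pow 2 y).const_add 1
  have h := (hasDerivAt_const y (4:ℝ)).div h1 (one_add_sq_pos y).ne'
  refine h.congr_deriv ?_
  field_simp
  ring

lemma deriv_Q : deriv Q = fun y : ℝ => -8 * y / (1 + y ^ 2) ^ 2 :=
  funext fun y => (hasDerivAt_Q y).deriv

lemma hasDerivAt_Qsq (y : ℝ) :
    HasDerivAt (fun y : ℝ => Q y ^ 2) (-64 * y / (1 + y ^ 2) ^ 3) y := by
  have h := (hasDerivAt_Q y).pow 2
  refine h.congr_deriv ?_
  simp only [Q]
  have hy1 : (1 + y ^ 2 : ℝ) ≠ 0 := (one_add_sq_pos y).ne'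
  norm_num
  field_simp
  ring

lemma deriv_Qsq : deriv (fun y : ℝ => Q y ^ 2) = fun y : ℝ => -64 * y / (1 + y ^ 2) ^ 3 :=
  funext fun y => (hasDerivAt_Qsq y).deriv

lemma abs_y_le (y : ℝ) : |y| ≤ 1 + y ^ 2 := by
  nlinarith [sq_abs y, abs_nonneg y]

lemma measurable_g1 : Measurable fun y : ℝ => -8 * y / (1 + y ^ 2) ^ 2 :=
  (measurable_id.const_mul (-8)).div (((measurable_id.pow_const 2).const_add 1).pow_const 2)

lemma measurable_g2 : Measurable fun y : ℝ => -64 * y / (1 + y ^ 2) ^ 3 :=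
  (measurable_id.const_mul (-64)).div (((measurable_id.pow_const 2).const_add 1).pow_const 3)

lemma bound_g1 (y : ℝ) : |(-8 * y / (1 + y ^ 2) ^ 2)| ≤ 8 / (1 + y ^ 2) := by
  have h2 : |(-8 * y / (1 + y ^ 2) ^ 2)| = 8 * |y| / (1 + y ^ 2) ^ 2 := by
    rw [abs_div, abs_mul, abs_of_pos (pow_pos (one_add_sq_pos y) 2)]
    norm_num
  rw [h2, div_le_div_iff₀ (by positivity) (one_add_sq_pos y)]
  nlinarith [abs_y_le y, abs_nonneg y, one_add_sq_pos y]

lemma bound_g2 (y : ℝ) : |(-64 * y / (1 + y ^ 2) ^ 3)| ≤ 64 / (1 + y ^ 2) := by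
  have h2 : |(-64 * y / (1 + y ^ 2) ^ 3)| = 64 * |y| / (1 + y ^ 2) ^ 3 := by
    rw [abs_div, abs_mul, abs_of_pos (pow_pos (one_add_sq_pos y) 3)]
    norm_num
  rw [h2, div_le_div_iff₀ (by positivity) (one_add_sq_pos y)]
  nlinarith [abs_y_le y, abs_nonneg y, one_add_sq_pos y, sq_nonneg y, sq_nonneg (y^2)]

set_option maxHeartbeats 1000000 in
lemma hilbert_deriv_Q (x : ℝ) :
    hilbertT (deriv Q) x = (4 * x ^ 2 - 4) / (1 + x ^ 2) ^ 2 := by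
  rw [deriv_Q]
  have hx1 : (1 + x ^ 2 : ℝ) ≠ 0 := (one_add_sq_pos x).ne'
  have h := key x (-8 * x / (1 + x ^ 2) ^ 2)
    (x * (-8 * x / (1 + x ^ 2) ^ 2) + (x * (-8 * x / (1 + x ^ 2) ^ 2) * (1 + x ^ 2) + 8) / 2)
    (-((-8 * x / (1 + x ^ 2) ^ 2) * (1 + x ^ 2)) / 2)
    ((x * (-8 * x / (1 + x ^ 2) ^ 2) * (1 + x ^ 2) + 8) / 2) 0 0 8
    (fun y : ℝ => -8 * y / (1 + y ^ 2) ^ 2) measurable_g1 bound_g1 ?_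
  · rw [h]
    field_simp
    ring
  · intro y hy
    have hder := hasDerivAt_FF x (-8 * x / (1 + x ^ 2) ^ 2)
      (x * (-8 * x / (1 + x ^ 2) ^ 2) + (x * (-8 * x / (1 + x ^ 2) ^ 2) * (1 + x ^ 2) + 8) / 2)
      (-((-8 * x / (1 + x ^ 2) ^ 2) * (1 + x ^ 2)) / 2)
      ((x * (-8 * x / (1 + x ^ 2) ^ 2) * (1 + x ^ 2) + 8) / 2) 0 0 y hy
    have hxy : x - y ≠ 0 := sub_ne_zero.2 (Ne.symm hy)
    have hy1 : (1 + y ^ 2 : ℝ) ≠ 0 := (one_add_sq_pos y).ne'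
    convert hder using 1
    field_simp
    ring

set_option maxHeartbeats 1000000 in
lemma hilbert_deriv_Qsq (x : ℝ) :
    hilbertT (deriv (fun y : ℝ => Q y ^ 2)) x
      = (8 * x ^ 4 + 48 * x ^ 2 - 24) / (1 + x ^ 2) ^ 3 := by
  rw [deriv_Qsq]
  have hx1 : (1 + x ^ 2 : ℝ) ≠ 0 := (one_add_sq_pos x).ne'
  have h := key x (-64 * x / (1 + x ^ 2) ^ 3)
    (x * (-64 * x / (1 + x ^ 2) ^ 3) + (x * (-64 * x / (1 + x ^ 2) ^ 3) * (1 + x ^ 2)) / 2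
      + 3 * (x * (-64 * x / (1 + x ^ 2) ^ 3) * (1 + x ^ 2) ^ 2 + 64) / 8)
    (-((-64 * x / (1 + x ^ 2) ^ 3) * (1 + x ^ 2)) / 2)
    ((x * (-64 * x / (1 + x ^ 2) ^ 3) * (1 + x ^ 2)) / 2
      + 3 * (x * (-64 * x / (1 + x ^ 2) ^ 3) * (1 + x ^ 2) ^ 2 + 64) / 8)
    (-((-64 * x / (1 + x ^ 2) ^ 3) * (1 + x ^ 2) ^ 2) / 4)
    ((x * (-64 * x / (1 + x ^ 2) ^ 3) * (1 + x ^ 2) ^ 2 + 64) / 4) 64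
    (fun y : ℝ => -64 * y / (1 + y ^ 2) ^ 3) measurable_g2 bound_g2 ?_
  · rw [h]
    field_simp
    ring
  · intro y hy
    have hder := hasDerivAt_FF x (-64 * x / (1 + x ^ 2) ^ 3)
      (x * (-64 * x / (1 + x ^ 2) ^ 3) + (x * (-64 * x / (1 + x ^ 2) ^ 3) * (1 + x ^ 2)) / 2
        + 3 * (x * (-64 * x / (1 + x ^ 2) ^ 3) * (1 + x ^ 2) ^ 2 + 64) / 8)
      (-((-64 * x / (1 + x ^ 2) ^ 3) * (1 + x ^ 2)) / 2)
      ((x * (-64 * x / (1 + x ^ 2) ^ 3) * (1 + x ^ 2)) / 2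
        + 3 * (x * (-64 * x / (1 + x ^ 2) ^ 3) * (1 + x ^ 2) ^ 2 + 64) / 8)
      (-((-64 * x / (1 + x ^ 2) ^ 3) * (1 + x ^ 2) ^ 2) / 4)
      ((x * (-64 * x / (1 + x ^ 2) ^ 3) * (1 + x ^ 2) ^ 2 + 64) / 4) y hy
    have hxy : x - y ≠ 0 := sub_ne_zero.2 (Ne.symm hy)
    have hy1 : (1 + y ^ 2 : ℝ) ≠ 0 := (one_add_sq_pos y).ne'
    convert hder using 1
    field_simp
    ring

theorem Lop_Q_and_Qsq :
    (∀ x : ℝ, Lop Q x = -(1 / 2) * Q x ^ 2) ∧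
      ∀ x : ℝ, Lop (fun y => Q y ^ 2) x = -2 * Q x - Q x ^ 2 := by
  constructor
  · intro x
    have hx1 : (1 + x ^ 2 : ℝ) ≠ 0 := (one_add_sq_pos x).ne'
    rw [Lop, hilbert_deriv_Q x]
    simp only [Q]
    field_simp
    ring
  · intro x
    have hx1 : (1 + x ^ 2 : ℝ) ≠ 0 := (one_add_sq_pos x).ne'
    rw [Lop, hilbert_deriv_Qsq x]
    simp only [Q]
    field_simp
    ring
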